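/- arXiv:2202.08356 — 5 statements merged into one kernel-verified Lean document; each statement's English description precedes it below -/
import Mathlib

section
/- Let n ≥ 3 and d ≥ 3 be integers. Let v₁, …, v_k (k ≥ 1) be nonzero fully product vectors in (ℂ^d)^{⊗n} that are pairwise orthogonal. If k ≤ d^{n-1} + ⌊(d^{n-1} − 2)/(n − 1)⌋, then there exist a site m and a nonzero biproduct vector split at site m that is orthogonal to every vᵢ. (Hence no genuinely unextendible product basis of such cardinality exists.) -/
open Finset in
lemma aux_exists_ne_zero_orth {Y I : Type*} [Fintype Y] [Fintype I] [DecidableEq Y]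
    (h : Fintype.card I < Fintype.card Y) (c : I → Y → ℂ) :
    ∃ ξ : Y → ℂ, ξ ≠ 0 ∧ ∀ i, ∑ y, c i y * ξ y = 0 := by
  let Φ : (Y → ℂ) →ₗ[ℂ] (I → ℂ) :=
    { toFun := fun ξ i => ∑ y, c i y * ξ y
      map_add' := fun a b => by ext i; simp [mul_add, Finset.sum_add_distrib]
      map_smul' := fun r a => by
        ext i; simp [Finset.mul_sum, smul_eq_mul, mul_left_comm]
      }
  by_cases hinj : Function.Injective Φ
  · exfalso
    have h2 := LinearMap.finrank_le_finrank_of_injective hinj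
    rw [Module.finrank_pi, Module.finrank_pi] at h2
    omega
  · rw [← LinearMap.ker_eq_bot] at hinj
    obtain ⟨ξ, hmem, hne⟩ := Submodule.exists_mem_ne_zero_of_ne_bot hinj
    exact ⟨ξ, hne, fun i => congrFun (LinearMap.mem_ker.mp hmem) i⟩

lemma aux_prod_split {n : ℕ} (m : Fin n) (f : Fin n → ℂ) :
    ∏ j, f j = f m * ∏ j : {j : Fin n // j ≠ m}, f j.1 := by
  rw [← Finset.mul_prod_erase Finset.univ f (Finset.mem_univ m)]
  congr 1
  exact Finset.prod_subtype _ (fun j => by simp [Finset.mem_erase]) _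

lemma aux_split_sum {n d : ℕ} (m : Fin n) (F : Fin n → Fin d → ℂ)
    (w : Fin d → ℂ) (ξ : ({j : Fin n // j ≠ m} → Fin d) → ℂ) :
    ∑ x : Fin n → Fin d, (∏ j, F j (x j)) * (w (x m) * ξ (fun j => x j.1))
      = (∑ a, F m a * w a) *
        (∑ y : {j : Fin n // j ≠ m} → Fin d,
          (∏ j : {j : Fin n // j ≠ m}, F j.1 (y j)) * ξ y) := by
  classical
  let e := Equiv.funSplitAt m (Fin d)
  rw [← e.symm.sum_comp fun x => (∏ j, F j (x j)) * (w (x m) * ξ (fun j => x j.1))]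
  rw [Fintype.sum_prod_type, Finset.sum_mul_sum]
  refine Finset.sum_congr rfl fun a _ => Finset.sum_congr rfl fun y _ => ?_
  have hm : e.symm (a, y) m = a := by simp [e, Equiv.funSplitAt, Equiv.piSplitAt]
  have hj : ∀ j : {j : Fin n // j ≠ m}, e.symm (a, y) j.1 = y j := by
    intro j
    simp [e, Equiv.funSplitAt, Equiv.piSplitAt, dif_neg j.2]
  rw [aux_prod_split m (fun j => F j (e.symm (a, y) j)), hm]
  have : (fun j : {j : Fin n // j ≠ m} => e.symm (a, y) j.1) = y := funext hj
  rw [this]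
  have : ∏ j : {j : Fin n // j ≠ m}, F j.1 (e.symm (a, y) j.1)
      = ∏ j : {j : Fin n // j ≠ m}, F j.1 (y j) :=
    Finset.prod_congr rfl fun j _ => by rw [hj j]
  rw [this]; ring

/-- Main result (Proposition 1): if `k` pairwise-orthogonal nonzero fully product
vectors in `(ℂ^d)^{⊗n}` satisfy `k ≤ d^{n-1} + ⌊(d^{n-1} - 2)/(n-1)⌋`, then there is
a site `m` and a nonzero biproduct vector split at `m` orthogonal to all of them.
Hence no GUPB of such cardinality exists. -/
theorem no_GUPB_of_small_cardinality
    (n d k : ℕ) (hn : 3 ≤ n) (hd : 3 ≤ d) (hk : 1 ≤ k)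
    (u : Fin k → Fin n → Fin d → ℂ)
    (hu : ∀ i m, u i m ≠ 0)
    (v : Fin k → (Fin n → Fin d) → ℂ)
    (hv : ∀ i, v i = fun x => ∏ m, u i m (x m))
    (horth : ∀ i j : Fin k, i ≠ j →
      ∑ x : Fin n → Fin d, (starRingEnd ℂ) (v i x) * v j x = 0)
    (hcard : k ≤ d ^ (n - 1) + (d ^ (n - 1) - 2) / (n - 1)) :
    ∃ (m : Fin n) (w : Fin d → ℂ)
      (ξ : ({j : Fin n // j ≠ m} → Fin d) → ℂ),
      w ≠ 0 ∧ ξ ≠ 0 ∧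
      ∀ i : Fin k,
        ∑ x : Fin n → Fin d,
          (starRingEnd ℂ) (v i x) * (w (x m) * ξ (fun j => x j.1)) = 0 := by
  classical
  set D := d ^ (n - 1) with hD
  have hD9 : 9 ≤ D := by
    calc (9 : ℕ) = 3 ^ 2 := by norm_num
    _ ≤ 3 ^ (n - 1) := Nat.pow_le_pow_right (by norm_num) (by omega)
    _ ≤ d ^ (n - 1) := Nat.pow_le_pow_left hd _
  have hnpos : 0 < n := by omega
  let i₀ : Fin k := ⟨0, Nat.lt_of_lt_of_le Nat.zero_lt_one hk⟩
  -- inner products at each site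
  set ip : Fin k → Fin k → Fin n → ℂ :=
    fun i j m => ∑ a, (starRingEnd ℂ) (u i m a) * u j m a with hip
  have horth' : ∀ i j : Fin k, i ≠ j → ∏ m, ip i j m = 0 := by
    intro i j hij
    have h := horth i j hij
    rw [hv, hv] at h
    calc ∏ m, ip i j m
        = ∑ x : Fin n → Fin d, ∏ m, (starRingEnd ℂ) (u i m (x m)) * u j m (x m) :=
          Fintype.prod_sum _
      _ = 0 := by
          rw [← h]
          refine Finset.sum_congr rfl fun x _ => ?_
          rw [Finset.prod_mul_distrib, map_prod]
  -- find a site m and a set S with local orthogonality to u i₀ m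
  have key : ∃ (m : Fin n) (S : Finset (Fin k)), (∀ i ∈ S, ip i i₀ m = 0) ∧ Sᶜ.card < D := by
    by_cases hkD : k < D
    · exact ⟨⟨0, hnpos⟩, ∅, by simp, by simpa using hkD⟩
    · push_neg at hkD
      have hg : ∀ i : Fin k, i ≠ i₀ → ∃ m, ip i i₀ m = 0 := by
        intro i hi
        have := horth' i i₀ hi
        rw [Finset.prod_eq_zero_iff] at this
        obtain ⟨m, _, hm⟩ := this
        exact ⟨m, hm⟩
      let g : Fin k → Fin n := fun i =>
        if h : i = i₀ then ⟨0, hnpos⟩ else (hg i h).choose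
      have hgspec : ∀ i : Fin k, i ≠ i₀ → ip i i₀ (g i) = 0 := by
        intro i hi
        simp only [g, dif_neg hi]
        exact (hg i hi).choose_spec
      -- pigeonhole
      have ht0 : (n - 1) * ((D - 2) / (n - 1)) ≤ D - 2 := Nat.mul_div_le _ _
      have hr : k - D ≤ (D - 2) / (n - 1) := by omega
      have hmul : (n - 1) * (k - D) ≤ D - 2 :=
        le_trans (Nat.mul_le_mul_left _ hr) ht0
      have hlt : (Finset.univ : Finset (Fin n)).card * (k - D) <
          ((Finset.univ : Finset (Fin k)).erase i₀).card := by
        rw [Finset.card_univ, Fintype.card_fin, Finset.card_erase_of_mem (Finset.mem_univ _),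
          Finset.card_univ, Fintype.card_fin]
        have h1 : n * (k - D) = (n - 1) * (k - D) + (k - D) := by
          cases n with
          | zero => omega
          | succ p => simp only [Nat.succ_sub_one]; ring
        omega
      obtain ⟨m, _, hm⟩ := Finset.exists_lt_card_fiber_of_mul_lt_card_of_maps_to
        (f := g) (fun a _ => Finset.mem_univ _) hlt
      refine ⟨m, ((Finset.univ : Finset (Fin k)).erase i₀).filter (fun i => g i = m),
        ?_, ?_⟩
      · intro i hi
        simp only [Finset.mem_filter, Finset.mem_erase] at hi
        rw [← hi.2]
        exact hgspec i hi.1.1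
      · have hcardS := Finset.card_compl
          (((Finset.univ : Finset (Fin k)).erase i₀).filter (fun i => g i = m))
        rw [hcardS, Fintype.card_fin]
        omega
  obtain ⟨m, S, hS, hScard⟩ := key
  -- the orthogonal ξ on the complement
  have hcardY : Fintype.card ({i // i ∈ Sᶜ}) <
      Fintype.card ({j : Fin n // j ≠ m} → Fin d) := by
    rw [Fintype.card_fun, Fintype.card_coe, Fintype.card_fin]
    have h1 : Fintype.card {j : Fin n // j ≠ m} = n - 1 := by
      rw [Fintype.card_subtype_compl, Fintype.card_subtype_eq, Fintype.card_fin]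
    rw [h1]
    exact hScard
  obtain ⟨ξ, hξne, hξ⟩ := aux_exists_ne_zero_orth hcardY
    (fun i y => ∏ j : {j : Fin n // j ≠ m}, (starRingEnd ℂ) (u i.1 j.1 (y j)))
  refine ⟨m, u i₀ m, ξ, hu i₀ m, hξne, fun i => ?_⟩
  rw [hv]
  have hsplit := aux_split_sum m (fun j a => (starRingEnd ℂ) (u i j a)) (u i₀ m) ξ
  calc ∑ x : Fin n → Fin d,
        (starRingEnd ℂ) (∏ j, u i j (x j)) * (u i₀ m (x m) * ξ (fun j => x j.1))
      = ∑ x : Fin n → Fin d,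
        (∏ j, (starRingEnd ℂ) (u i j (x j))) * (u i₀ m (x m) * ξ (fun j => x j.1)) := by
        refine Finset.sum_congr rfl fun x _ => ?_
        rw [map_prod]
    _ = (∑ a, (starRingEnd ℂ) (u i m a) * u i₀ m a) *
        (∑ y : {j : Fin n // j ≠ m} → Fin d,
          (∏ j : {j : Fin n // j ≠ m}, (starRingEnd ℂ) (u i j.1 (y j))) * ξ y) := hsplit
    _ = 0 := by
        by_cases hiS : i ∈ S
        · rw [show (∑ a, (starRingEnd ℂ) (u i m a) * u i₀ m a) = ip i i₀ m from rfl,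
            hS i hiS, zero_mul]
        · rw [hξ ⟨i, Finset.mem_compl.mpr hiS⟩, mul_zero]
end

section
/- Let n ≥ 3 and d ≥ 3 be integers. Let v₁, …, v_k be nonzero fully product vectors in (ℂ^d)^{⊗n} that are pairwise orthogonal, where k = d^{n-1} + d − 1 or k = d^{n-1} + d (the minimal theoretically permissible cardinalities of a genuinely unextendible product basis, for odd and even d respectively). Then there exist a site m and a nonzero biproduct vector split at site m orthogonal to every vᵢ; i.e., no unextendible product basis of these cardinalities is a genuinely unextendible product basis. -/
open Finset

/-- Sum over product space factorizes into product of sums. -/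
lemma gupb_prod_sum {n d : ℕ} (F : Fin n → Fin d → ℂ) :
    ∑ x : Fin n → Fin d, ∏ m, F m (x m) = ∏ m, ∑ a, F m a :=
  (Fintype.prod_sum F).symm

/-- Splitting a sum over the product space at one site. -/
lemma gupb_split {n d : ℕ} (m : Fin n) (G : Fin n → Fin d → ℂ)
    (w : Fin d → ℂ) (ξ : ({j : Fin n // j ≠ m} → Fin d) → ℂ) :
    ∑ x : Fin n → Fin d, (∏ j, G j (x j)) * (w (x m) * ξ (fun j => x j.1))
      = (∑ a, G m a * w a) *
        (∑ y : {j : Fin n // j ≠ m} → Fin d, (∏ j, G j.1 (y j)) * ξ y) := by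
  rw [← Equiv.sum_comp (Equiv.funSplitAt m (Fin d)).symm
    (fun x => (∏ j, G j (x j)) * (w (x m) * ξ (fun j => x j.1)))]
  rw [Fintype.sum_prod_type, Finset.sum_mul_sum]
  refine Finset.sum_congr rfl fun a _ => Finset.sum_congr rfl fun y _ => ?_
  have h1 : (Equiv.funSplitAt m (Fin d)).symm (a, y) m = a := by
    simp [Equiv.funSplitAt, Equiv.piSplitAt]
  have h2 : ∀ j : {j : Fin n // j ≠ m},
      (Equiv.funSplitAt m (Fin d)).symm (a, y) j.1 = y j := by
    intro j
    simp [Equiv.funSplitAt, Equiv.piSplitAt, j.2]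
  have h3 : (fun j : {j : Fin n // j ≠ m} =>
      (Equiv.funSplitAt m (Fin d)).symm (a, y) j.1) = y := funext h2
  have h4 : ∏ j, G j ((Equiv.funSplitAt m (Fin d)).symm (a, y) j)
      = G m a * ∏ j : {j : Fin n // j ≠ m}, G j.1 (y j) := by
    rw [Fintype.prod_eq_mul_prod_compl m, h1,
      Finset.prod_subtype ({m}ᶜ : Finset (Fin n)) (p := fun j => j ≠ m)
        (fun j => by simp)]
    exact congrArg (G m a * ·) (Finset.prod_congr rfl fun j _ => by rw [h2])
  rw [h1, h3, h4]; ring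

/-- Nonzero common kernel element for few linear conditions. -/
lemma gupb_exists_ker {ι T : Type*} [Fintype ι] [Fintype T] [DecidableEq ι]
    (c : T → ι → ℂ) (h : Fintype.card T < Fintype.card ι) :
    ∃ ξ : ι → ℂ, ξ ≠ 0 ∧ ∀ i, ∑ y, c i y * ξ y = 0 := by
  classical
  set φ : T → (ι → ℂ) →ₗ[ℂ] ℂ := fun i => ∑ y, c i y • LinearMap.proj y with hφ
  set L : (ι → ℂ) →ₗ[ℂ] (T → ℂ) := LinearMap.pi φ with hL
  have happ : ∀ i (ξ : ι → ℂ), φ i ξ = ∑ y, c i y * ξ y := by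
    intro i ξ
    simp [hφ, LinearMap.sum_apply, LinearMap.smul_apply, smul_eq_mul]
  have hker : LinearMap.ker L ≠ ⊥ := by
    intro hbot
    have hinj : Function.Injective L := LinearMap.ker_eq_bot.mp hbot
    have := LinearMap.finrank_le_finrank_of_injective hinj
    rw [Module.finrank_fintype_fun_eq_card, Module.finrank_fintype_fun_eq_card] at this
    omega
  obtain ⟨ξ, hmem, hne⟩ := Submodule.ne_bot_iff _ |>.mp hker
  refine ⟨ξ, hne, fun i => ?_⟩
  have : L ξ = 0 := hmem
  have := congrFun this i
  rw [← happ i ξ]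
  exact this

lemma gupb_arith {n d : ℕ} (hn : 3 ≤ n) (hd : 3 ≤ d) : n * d ≤ d ^ (n - 1) := by
  have h3 : n ≤ 3 ^ (n - 2) := by
    obtain ⟨m, rfl⟩ : ∃ m, n = m + 3 := ⟨n - 3, by omega⟩
    induction m with
    | zero => norm_num
    | succ p ih =>
      have := ih (by omega)
      have h5 : (3:ℕ) ^ (p + 1 + 3 - 2) = 3 * 3 ^ (p + 3 - 2) := by
        rw [← pow_succ']
        congr 1
      omega
  have h4 : n ≤ d ^ (n - 2) := h3.trans (Nat.pow_le_pow_left hd _)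
  calc n * d ≤ d ^ (n - 2) * d := Nat.mul_le_mul_right d h4
    _ = d ^ (n - 1) := by
        rw [← pow_succ]
        congr 1
        omega
/-- UPBs of the minimal permissible cardinalities `d^{n-1} + d - 1` (odd `d`) and
`d^{n-1} + d` (even `d`) are never genuinely unextendible: any such family of
pairwise-orthogonal nonzero fully product vectors admits a nonzero biproduct
vector, split at some site `m`, orthogonal to all its members. -/
theorem no_GUPB_of_minimal_cardinality
    (n d k : ℕ) (hn : 3 ≤ n) (hd : 3 ≤ d)
    (hk : k = d ^ (n - 1) + d - 1 ∨ k = d ^ (n - 1) + d)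
    (u : Fin k → Fin n → Fin d → ℂ)
    (hu : ∀ i m, u i m ≠ 0)
    (v : Fin k → (Fin n → Fin d) → ℂ)
    (hv : ∀ i, v i = fun x => ∏ m, u i m (x m))
    (horth : ∀ i j : Fin k, i ≠ j →
      ∑ x : Fin n → Fin d, (starRingEnd ℂ) (v i x) * v j x = 0) :
    ∃ (m : Fin n) (w : Fin d → ℂ)
      (ξ : ({j : Fin n // j ≠ m} → Fin d) → ℂ),
      w ≠ 0 ∧ ξ ≠ 0 ∧
      ∀ i : Fin k,
        ∑ x : Fin n → Fin d,
          (starRingEnd ℂ) (v i x) * (w (x m) * ξ (fun j => x j.1)) = 0 := by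
  classical
  set E := d ^ (n - 1) with hE
  have hnd : n * d ≤ E := gupb_arith hn hd
  have h9 : 9 ≤ E := le_trans (Nat.mul_le_mul hn hd) hnd
  have hkE : E ≤ k := by omega
  have hk0 : 0 < k := by omega
  set i0 : Fin k := ⟨0, hk0⟩ with hi0
  set ip : Fin k → Fin n → ℂ :=
    fun j m => ∑ a, (starRingEnd ℂ) (u j m a) * u i0 m a with hip
  -- coverage: every j ≠ i0 is locally orthogonal to i0 at some site
  have hcov : ∀ j : Fin k, j ≠ i0 → ∃ m, ip j m = 0 := by
    intro j hj
    have h0 := horth i0 j (fun h => hj h.symm)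
    simp only [hv, map_prod] at h0
    have h1 : ∑ x : Fin n → Fin d,
        ∏ m, ((starRingEnd ℂ) (u i0 m (x m)) * u j m (x m)) = 0 := by
      rw [← h0]
      exact Finset.sum_congr rfl fun x _ => Finset.prod_mul_distrib
    rw [gupb_prod_sum
      (fun mm a => (starRingEnd ℂ) (u i0 mm a) * u j mm a)] at h1
    obtain ⟨m, _, hm⟩ := Finset.prod_eq_zero_iff.mp h1
    refine ⟨m, ?_⟩
    have h2 : ip j m =
        (starRingEnd ℂ) (∑ a, (starRingEnd ℂ) (u i0 m a) * u j m a) := by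
      simp [hip, map_sum, map_mul, mul_comm]
    rw [h2, hm, map_zero]
  -- pigeonhole: some site has many vectors locally orthogonal to i0
  set A : Fin n → Finset (Fin k) :=
    fun m => Finset.univ.filter (fun j => ip j m = 0) with hA
  set t := k - E + 1 with ht
  have hex : ∃ m, t ≤ (A m).card := by
    by_contra hcon
    push_neg at hcon
    have hsub : (Finset.univ.filter (· ≠ i0) : Finset (Fin k)) ⊆
        Finset.univ.biUnion A := by
      intro j hj
      rw [Finset.mem_filter] at hj
      obtain ⟨m, hm⟩ := hcov j hj.2
      exact Finset.mem_biUnion.mpr ⟨m, Finset.mem_univ m,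
        Finset.mem_filter.mpr ⟨Finset.mem_univ j, hm⟩⟩
    have h1 := Finset.card_le_card hsub
    have h2 := Finset.card_biUnion_le (s := (Finset.univ : Finset (Fin n))) (t := A)
    have h3 : ∑ m, (A m).card ≤ n * (t - 1) := by
      calc ∑ m, (A m).card ≤ ∑ _m : Fin n, (t - 1) :=
            Finset.sum_le_sum fun m _ => by have := hcon m; omega
        _ = n * (t - 1) := by simp [Finset.sum_const, mul_comm]
    have h4 : (Finset.univ.filter (· ≠ i0) : Finset (Fin k)).card = k - 1 := by
      rw [Finset.filter_ne', Finset.card_erase_of_mem (Finset.mem_univ _),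
        Finset.card_univ, Fintype.card_fin]
    have h5 : n * (t - 1) ≤ n * d := Nat.mul_le_mul_left n (by omega)
    omega
  obtain ⟨m, hm⟩ := hex
  set T := (Finset.univ \ A m : Finset (Fin k)) with hT
  have hTcard : T.card ≤ E - 1 := by
    have h6 : T.card = k - (A m).card := by
      rw [hT, Finset.card_sdiff_of_subset (Finset.subset_univ _), Finset.card_univ,
        Fintype.card_fin]
    omega
  have hcard : Fintype.card {x // x ∈ T} <
      Fintype.card ({j : Fin n // j ≠ m} → Fin d) := by
    have hc1 : Fintype.card {j : Fin n // j ≠ m} = n - 1 := by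
      simp [Fintype.card_subtype_compl]
    rw [Fintype.card_coe, Fintype.card_fun, Fintype.card_fin, hc1]
    omega
  obtain ⟨ξ, hξ, hξ0⟩ := gupb_exists_ker
    (fun (i : {x // x ∈ T}) (y : {j : Fin n // j ≠ m} → Fin d) =>
      ∏ jj, (starRingEnd ℂ) (u i.1 jj.1 (y jj))) hcard
  refine ⟨m, u i0 m, ξ, hu i0 m, hξ, fun i => ?_⟩
  simp only [hv, map_prod]
  rw [gupb_split m (fun j a => (starRingEnd ℂ) (u i j a)) (u i0 m) ξ]
  by_cases hiA : i ∈ A m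
  · have h7 : (∑ a, (starRingEnd ℂ) (u i m a) * u i0 m a) = 0 :=
      (Finset.mem_filter.mp hiA).2
    rw [h7, zero_mul]
  · have hiT : i ∈ T := by
      rw [hT, Finset.mem_sdiff]
      exact ⟨Finset.mem_univ i, hiA⟩
    have h8 := hξ0 ⟨i, hiT⟩
    rw [h8, mul_zero]
end

section
/- Let φ : I → (Fin a → ℂ) and ψ : I → (Fin b → ℂ) be finite families of vectors, and suppose I is partitioned into disjoint sets I₁ and I₂ (I = I₁ ∪ I₂, I₁ ∩ I₂ = ∅) such that the span of {φ_i : i ∈ I₁} is a proper subspace of ℂ^a and the span of {ψ_i : i ∈ I₂} is a proper subspace of ℂ^b. Then there exist nonzero vectors a' ∈ Fin a → ℂ and b' ∈ Fin b → ℂ such that ⟨a', φ_i⟩ · ⟨b', ψ_i⟩ = 0 for every i ∈ I; i.e., the nonzero product vector a' ⊗ b' in ℂ^a ⊗ ℂ^b is orthogonal to every product vector φ_i ⊗ ψ_i. -/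
lemma exists_perp_of_span_ne_top (n : ℕ) (s : Set (Fin n → ℂ))
    (h : Submodule.span ℂ s ≠ ⊤) :
    ∃ v : Fin n → ℂ, v ≠ 0 ∧ ∀ u ∈ s, ∑ x, (starRingEnd ℂ) (v x) * u x = 0 := by
  let s' : Set (EuclideanSpace ℂ (Fin n)) := WithLp.toLp 2 '' s
  have h' : Submodule.span ℂ s' ≠ ⊤ := by
    intro hc; apply h
    have := congrArg (Submodule.map (WithLp.linearEquiv 2 ℂ (Fin n → ℂ)).toLinearMap) hc
    rw [Submodule.map_span, Submodule.map_top] at this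
    simpa [s', Set.image_image] using this
  have hbot : (Submodule.span ℂ s')ᗮ ≠ ⊥ := fun hc =>
    h' (Submodule.orthogonal_eq_bot_iff.mp hc)
  obtain ⟨v, hv, hvne⟩ := Submodule.exists_mem_ne_zero_of_ne_bot hbot
  refine ⟨v.ofLp, fun h => hvne (by rw [← WithLp.toLp_ofLp (x := v), h]; simp), fun u hu => ?_⟩
  have hu' : (WithLp.toLp 2 u : EuclideanSpace ℂ (Fin n)) ∈ Submodule.span ℂ s' := Submodule.subset_span ⟨u, hu, rfl⟩
  have h2 : @inner ℂ (EuclideanSpace ℂ (Fin n)) _ (WithLp.toLp 2 u) v = 0 :=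
    (Submodule.mem_orthogonal _ _).mp hv _ hu'
  rw [PiLp.inner_apply] at h2
  have h3 := congrArg (starRingEnd ℂ) h2
  simp only [map_sum, map_mul, RingHom.id_apply, starRingEnd_self_apply, map_zero] at h3
  simpa [mul_comm] using h3

/-- Sufficiency half of the Bennett et al. criterion: if the index set is
partitioned into `I₁` and `I₂` whose local vectors fail to span `ℂ^a` resp.
`ℂ^b`, then there is a nonzero product vector `a' ⊗ b'` orthogonal to every
`φ_i ⊗ ψ_i`. -/
theorem extendible_of_partition {I : Type*} [Fintype I] [DecidableEq I] (a b : ℕ)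
    (φ : I → Fin a → ℂ) (ψ : I → Fin b → ℂ)
    (I₁ I₂ : Finset I) (hunion : I₁ ∪ I₂ = Finset.univ) (hdisj : I₁ ∩ I₂ = ∅)
    (hφ : Submodule.span ℂ (φ '' ↑I₁) ≠ ⊤)
    (hψ : Submodule.span ℂ (ψ '' ↑I₂) ≠ ⊤) :
    ∃ (a' : Fin a → ℂ) (b' : Fin b → ℂ), a' ≠ 0 ∧ b' ≠ 0 ∧
      ∀ i : I,
        (∑ x : Fin a, (starRingEnd ℂ) (a' x) * φ i x) *
          (∑ y : Fin b, (starRingEnd ℂ) (b' y) * ψ i y) = 0 := by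
  obtain ⟨a', ha0, ha⟩ := exists_perp_of_span_ne_top a _ hφ
  obtain ⟨b', hb0, hb⟩ := exists_perp_of_span_ne_top b _ hψ
  refine ⟨a', b', ha0, hb0, fun i => ?_⟩
  have hi : i ∈ I₁ ∪ I₂ := by rw [hunion]; exact Finset.mem_univ i
  rcases Finset.mem_union.mp hi with h1 | h2
  · rw [ha (φ i) ⟨i, h1, rfl⟩, zero_mul]
  · rw [hb (ψ i) ⟨i, h2, rfl⟩, mul_zero]
end

section
/- (Bennett et al. criterion, bipartite form.) Let φ : Fin k → (Fin a → ℂ) and ψ : Fin k → (Fin b → ℂ) with k ≥ a + b − 1. Then the following are equivalent: (1) there exist nonzero vectors a' ∈ Fin a → ℂ and b' ∈ Fin b → ℂ with ⟨a', φ_i⟩ · ⟨b', ψ_i⟩ = 0 for all i (i.e., the set {φ_i ⊗ ψ_i} is extendible by a product vector); (2) there exists a partition of Fin k into disjoint sets I₁ and I₂ such that the span of {φ_i : i ∈ I₁} is a proper subspace of ℂ^a and the span of {ψ_i : i ∈ I₂} is a proper subspace of ℂ^b. -/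
open Finset

/-- If a set does not span `ℂ^n`, there is a nonzero vector orthogonal to it. -/
lemma exists_orth_of_span_ne_top {n : ℕ} (S : Set (Fin n → ℂ))
    (h : Submodule.span ℂ S ≠ ⊤) :
    ∃ v : Fin n → ℂ, v ≠ 0 ∧ ∀ s ∈ S, ∑ x, (starRingEnd ℂ) (v x) * s x = 0 := by
  obtain ⟨f, hf0, hle⟩ := Submodule.exists_le_ker_of_lt_top _ (lt_top_iff_ne_top.mpr h)
  refine ⟨fun x => starRingEnd ℂ (f (fun j => if x = j then 1 else 0)), ?_, ?_⟩
  · intro hv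
    have he : ∀ x, f (fun j => if x = j then 1 else 0) = 0 := fun x => by
      simpa using congrFun hv x
    apply hf0
    refine LinearMap.ext fun s => ?_
    rw [LinearMap.pi_apply_eq_sum_univ f s]
    simp [he]
  · intro s hs
    have := hle (Submodule.subset_span hs)
    rw [LinearMap.mem_ker, LinearMap.pi_apply_eq_sum_univ f s] at this
    simpa [mul_comm] using this

/-- If a nonzero vector is orthogonal to `S`, then `S` does not span. -/
lemma span_ne_top_of_orth {n : ℕ} (S : Set (Fin n → ℂ)) (v : Fin n → ℂ)
    (hv : v ≠ 0) (h : ∀ s ∈ S, ∑ x, (starRingEnd ℂ) (v x) * s x = 0) :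
    Submodule.span ℂ S ≠ ⊤ := by
  intro htop
  let g : (Fin n → ℂ) →ₗ[ℂ] ℂ :=
    { toFun := fun s => ∑ x, (starRingEnd ℂ) (v x) * s x
      map_add' := by intros; simp [mul_add, Finset.sum_add_distrib]
      map_smul' := by intros; simp [Finset.mul_sum, mul_left_comm] }
  have hle : Submodule.span ℂ S ≤ LinearMap.ker g :=
    Submodule.span_le.mpr (fun s hs => by simpa [g] using h s hs)
  have hv0 : g v = 0 := hle (htop ▸ Submodule.mem_top)
  have h1 : ∑ x, ((Complex.normSq (v x) : ℝ) : ℂ) = 0 := by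
    rw [← hv0]; simp [g, Complex.normSq_eq_conj_mul_self]
  have h2 : ∑ x, Complex.normSq (v x) = 0 := by exact_mod_cast h1
  apply hv
  funext x
  have h3 := (Finset.sum_eq_zero_iff_of_nonneg
    (fun i _ => Complex.normSq_nonneg (v i))).mp h2 x (Finset.mem_univ x)
  simpa using h3

/-- Bennett et al. criterion (bipartite form): for `k ≥ a + b - 1`, the set
`{φ_i ⊗ ψ_i}` is extendible by a nonzero product vector iff the index set can
be partitioned into `I₁`, `I₂` whose local vectors fail to span `ℂ^a` resp.
`ℂ^b`. -/
theorem bennett_criterion (a b k : ℕ) (ha : 1 ≤ a) (hb : 1 ≤ b)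
    (hk : a + b - 1 ≤ k)
    (φ : Fin k → Fin a → ℂ) (ψ : Fin k → Fin b → ℂ) :
    (∃ (a' : Fin a → ℂ) (b' : Fin b → ℂ), a' ≠ 0 ∧ b' ≠ 0 ∧
      ∀ i : Fin k,
        (∑ x : Fin a, (starRingEnd ℂ) (a' x) * φ i x) *
          (∑ y : Fin b, (starRingEnd ℂ) (b' y) * ψ i y) = 0) ↔
    (∃ I₁ I₂ : Finset (Fin k), I₁ ∪ I₂ = Finset.univ ∧ I₁ ∩ I₂ = ∅ ∧
      Submodule.span ℂ (φ '' ↑I₁) ≠ ⊤ ∧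
      Submodule.span ℂ (ψ '' ↑I₂) ≠ ⊤) := by
  classical
  constructor
  · rintro ⟨a', b', ha', hb', hprod⟩
    refine ⟨Finset.univ.filter (fun i => ∑ x, (starRingEnd ℂ) (a' x) * φ i x = 0),
      Finset.univ.filter (fun i => ¬ ∑ x, (starRingEnd ℂ) (a' x) * φ i x = 0),
      ?_, ?_, ?_, ?_⟩
    · rw [← Finset.filter_or]
      simp [em]
    · rw [← Finset.filter_and]
      simp
    · apply span_ne_top_of_orth _ a' ha'
      rintro s ⟨i, hi, rfl⟩
      simpa using hi
    · apply span_ne_top_of_orth _ b' hb'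
      rintro s ⟨i, hi, rfl⟩
      have h1 : ¬ (∑ x, (starRingEnd ℂ) (a' x) * φ i x = 0) := by
        simpa using hi
      exact (mul_eq_zero.mp (hprod i)).resolve_left h1
  · rintro ⟨I₁, I₂, hunion, hinter, h1, h2⟩
    obtain ⟨a', ha', ha'o⟩ := exists_orth_of_span_ne_top _ h1
    obtain ⟨b', hb', hb'o⟩ := exists_orth_of_span_ne_top _ h2
    refine ⟨a', b', ha', hb', fun i => ?_⟩
    have : i ∈ I₁ ∪ I₂ := hunion ▸ Finset.mem_univ i
    rcases Finset.mem_union.mp this with hi | hi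
    · rw [ha'o (φ i) ⟨i, hi, rfl⟩, zero_mul]
    · rw [hb'o (ψ i) ⟨i, hi, rfl⟩, mul_zero]
end

section
/- Let u^{(1)}, …, u^{(k)} : Fin n → (Fin d → ℂ) be tuples of nonzero local vectors with induced fully product vectors v₁, …, v_k in (ℂ^d)^{⊗n}. Suppose there exist an index i, a site m, and a set T of indices with i ∉ T and |T| ≥ k − d^{n-1} + 1, such that ⟨u_m^{(i)}, u_m^{(j)}⟩ = 0 for every j ∈ T. Then there exists a nonzero biproduct vector split at site m (with site-m factor u_m^{(i)}) orthogonal to all of v₁, …, v_k. (This is the structural core of the main proof; pairwise orthogonality of the vᵢ is not needed, and if the orthogonality count |T| exceeds the pigeonhole value by μ, the admissible cardinality k increases by μ.) -/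
/-- Structural core of the main proof: if some tuple `u^{(i)}` is orthogonal at
site `m` to at least `k - d^{n-1} + 1` of the other tuples (indexed by `T`),
then the biproduct vector with site-`m` factor `u_m^{(i)}` and a suitable
nonzero `ξ` on the remaining sites is orthogonal to all induced product
vectors `v₁, …, v_k`. -/
theorem biproduct_extension (n d k : ℕ) (hn : 2 ≤ n) (hd : 1 ≤ d)
    (u : Fin k → Fin n → Fin d → ℂ) (hu : ∀ i m, u i m ≠ 0)
    (v : Fin k → (Fin n → Fin d) → ℂ)
    (hv : ∀ i, v i = fun x => ∏ m, u i m (x m))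
    (i : Fin k) (m : Fin n) (T : Finset (Fin k))
    (hiT : i ∉ T) (hT : k - d ^ (n - 1) + 1 ≤ T.card)
    (horth : ∀ j ∈ T,
      ∑ a : Fin d, (starRingEnd ℂ) (u i m a) * u j m a = 0) :
    ∃ ξ : ({j : Fin n // j ≠ m} → Fin d) → ℂ, ξ ≠ 0 ∧
      ∀ l : Fin k,
        ∑ x : Fin n → Fin d,
          (starRingEnd ℂ) (v l x) * (u i m (x m) * ξ (fun j => x j.1)) = 0 := by
  classical
  let E := EuclideanSpace ℂ ({j : Fin n // j ≠ m} → Fin d)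
  let w : Fin k → E := fun l => WithLp.toLp 2 (fun y => ∏ j : {j : Fin n // j ≠ m}, u l j.1 (y j))
  have hcard : Fintype.card ({j : Fin n // j ≠ m} → Fin d) = d ^ (n - 1) := by
    rw [Fintype.card_fun, Fintype.card_fin]
    congr 1
    rw [Fintype.card_subtype_compl, Fintype.card_subtype_eq, Fintype.card_fin]
  -- key factorization
  have key : ∀ (l : Fin k) (ξ : ({j : Fin n // j ≠ m} → Fin d) → ℂ),
      (∑ x : Fin n → Fin d,
        (starRingEnd ℂ) (v l x) * (u i m (x m) * ξ (fun j => x j.1)))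
      = (∑ a : Fin d, (starRingEnd ℂ) (u l m a) * u i m a)
        * ∑ y : ({j : Fin n // j ≠ m} → Fin d), (starRingEnd ℂ) (w l y) * ξ y := by
    intro l ξ
    rw [hv, Finset.sum_mul_sum]
    rw [← (Equiv.funSplitAt m (Fin d)).symm.sum_comp, Fintype.sum_prod_type]
    refine Finset.sum_congr rfl fun a _ => Finset.sum_congr rfl fun y _ => ?_
    have hm : (Equiv.funSplitAt m (Fin d)).symm (a, y) m = a := by
      simp [Equiv.funSplitAt, Equiv.piSplitAt]
    have hj : ∀ j : {j : Fin n // j ≠ m},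
        (Equiv.funSplitAt m (Fin d)).symm (a, y) j.1 = y j := by
      intro j
      simp only [Equiv.funSplitAt, Equiv.piSplitAt, Equiv.coe_fn_symm_mk]
      rw [dif_neg j.2]
    have hprod : (∏ j : Fin n, u l j ((Equiv.funSplitAt m (Fin d)).symm (a, y) j))
        = u l m a * w l y := by
      rw [← Finset.mul_prod_erase Finset.univ _ (Finset.mem_univ m), hm]
      congr 1
      rw [Finset.prod_subtype (Finset.univ.erase m)
        (p := fun j => j ≠ m) (by simp) (fun j => u l j ((Equiv.funSplitAt m (Fin d)).symm (a, y) j))]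
      exact Finset.prod_congr rfl fun j _ => by rw [hj j]
    have hξ : ξ (fun j : {j : Fin n // j ≠ m} =>
        (Equiv.funSplitAt m (Fin d)).symm (a, y) j.1) = ξ y := by
      congr 1; funext j; exact hj j
    dsimp only
    rw [hprod, hξ, hm, map_mul]
    ring
  -- the span of the vectors not in T
  let S : Finset (Fin k) := Finset.univ \ T
  let V : Submodule ℂ E := Submodule.span ℂ (S.image w : Set E)
  have hdim : Module.finrank ℂ V < Module.finrank ℂ E := by
    have h1 : Module.finrank ℂ V ≤ (S.image w).card := by
      have := finrank_span_finset_le_card (R := ℂ) (S.image w)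
      rwa [Set.finrank] at this
    have h2 : (S.image w).card ≤ S.card := Finset.card_image_le
    have h3 : S.card = k - T.card := by
      simp [S, Finset.card_sdiff_of_subset (Finset.subset_univ T)]
    have h4 : T.card ≤ k := by
      simpa using Finset.card_le_card (Finset.subset_univ T)
    have h5 : Module.finrank ℂ E = d ^ (n - 1) := by
      rw [finrank_euclideanSpace, hcard]
    have hD : 1 ≤ d ^ (n - 1) := Nat.one_le_pow _ _ hd
    rw [h5]
    omega
  have hVne : V ≠ ⊤ := fun h => by rw [h, finrank_top ℂ E] at hdim; omega
  have hbot : Vᗮ ≠ ⊥ := fun h => hVne (Submodule.orthogonal_eq_bot_iff.mp h)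
  obtain ⟨ξ, hξV, hξ0⟩ := Submodule.exists_mem_ne_zero_of_ne_bot hbot
  refine ⟨ξ.ofLp, fun h => hξ0 (by simpa using congrArg (WithLp.toLp 2) h), fun l => ?_⟩
  rw [key l ξ.ofLp]
  by_cases hl : l ∈ T
  · have h := congrArg (starRingEnd ℂ) (horth l hl)
    simp only [map_sum, map_zero, map_mul, RingHomCompTriple.comp_apply,
      Complex.conj_conj, RingHom.id_apply] at h
    have : (∑ a : Fin d, (starRingEnd ℂ) (u l m a) * u i m a) = 0 := by
      rw [← h]; exact Finset.sum_congr rfl fun a _ => mul_comm _ _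
    rw [this, zero_mul]
  · have hwV : w l ∈ V := Submodule.subset_span
      (Finset.mem_coe.mpr (Finset.mem_image_of_mem w (by simp [S, hl])))
    have : (inner ℂ (w l) ξ : ℂ) = 0 :=
      (Submodule.mem_orthogonal V ξ).mp hξV (w l) hwV
    rw [PiLp.inner_apply] at this
    simp only [RCLike.inner_apply] at this
    simp only [mul_comm (ξ.ofLp _)] at this
    rw [this, mul_zero]
end
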